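/- Let X be a d×d self-adjoint random matrix and let M be a d×d Hermitian matrix of rank r. Then ‖E[(X − E X) M (X − E X)]‖ ≤ σ*(X)² · r · ‖M‖, where ‖·‖ denotes the operator (spectral) norm. -/

import Mathlib

open MeasureTheory ProbabilityTheory Matrix
open scoped ComplexOrder

noncomputable section

/-- squared ℓ² norm of a complex vector -/
def nsq {d : ℕ} (v : Fin d → ℂ) : ℝ := ∑ i, ‖v i‖ ^ 2

/-- Rayleigh quotient (real part) ⟨v, M v⟩ of a matrix at a vector -/
def ray {d : ℕ} (M : Matrix (Fin d) (Fin d) ℂ) (v : Fin d → ℂ) : ℝ :=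
  (star v ⬝ᵥ M.mulVec v).re

/-- largest eigenvalue of a Hermitian matrix, characterized as the supremum of the
Rayleigh quotient over ℓ²-unit vectors -/
def lmax {d : ℕ} (M : Matrix (Fin d) (Fin d) ℂ) : ℝ := sSup {x | ∃ v, nsq v = 1 ∧ x = ray M v}

/-- ℓ²→ℓ² operator (spectral) norm of a matrix -/
def opN {d : ℕ} (M : Matrix (Fin d) (Fin d) ℂ) : ℝ :=
  sSup {x | ∃ v, nsq v = 1 ∧ x = Real.sqrt (nsq (M.mulVec v))}

/-- entrywise expectation of a random matrix -/
def Emat {Ω : Type*} [MeasurableSpace Ω] {d : ℕ} (μ : Measure Ω)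
    (X : Ω → Matrix (Fin d) (Fin d) ℂ) : Matrix (Fin d) (Fin d) ℂ :=
  Matrix.of fun i j => ∫ ω, X ω i j ∂μ

/-- the quadratic map M ↦ E[(X - E X) M (X - E X)] -/
def qmap {Ω : Type*} [MeasurableSpace Ω] {d : ℕ} (μ : Measure Ω)
    (X : Ω → Matrix (Fin d) (Fin d) ℂ) (M : Matrix (Fin d) (Fin d) ℂ) :
    Matrix (Fin d) (Fin d) ℂ :=
  Emat μ fun ω => (X ω - Emat μ X) * M * (X ω - Emat μ X)

/-- σ*(X)² = sup_{‖v‖=‖w‖=1} E |⟨v, (X - E X) w⟩|² -/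
def sigmaStarSq {Ω : Type*} [MeasurableSpace Ω] {d : ℕ} (μ : Measure Ω)
    (X : Ω → Matrix (Fin d) (Fin d) ℂ) : ℝ :=
  sSup {x | ∃ v w : Fin d → ℂ, nsq v = 1 ∧ nsq w = 1 ∧
    x = ∫ ω, ‖star v ⬝ᵥ (X ω - Emat μ X).mulVec w‖ ^ 2 ∂μ}

/-- σ*(X) -/
def sigmaStar {Ω : Type*} [MeasurableSpace Ω] {d : ℕ} (μ : Measure Ω)
    (X : Ω → Matrix (Fin d) (Fin d) ℂ) : ℝ :=
  Real.sqrt (sigmaStarSq μ X)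

/-- Lehner's variational quantity
Λ(X) = inf_{M > 0} λ_max(E X + M⁻¹ + E[(X - E X) M (X - E X)]),
the infimum being over positive definite Hermitian matrices M; by Lehner's formula this equals
the upper spectral edge λ_max(X_free) of the associated free operator. -/
def Lehner {Ω : Type*} [MeasurableSpace Ω] {d : ℕ} (μ : Measure Ω)
    (X : Ω → Matrix (Fin d) (Fin d) ℂ) : ℝ :=
  sInf {x | ∃ M : Matrix (Fin d) (Fin d) ℂ, M.PosDef ∧
    x = lmax (Emat μ X + M⁻¹ + qmap μ X M)}

/-- B(θ) = 2 for θ ≤ 1 and θ + 1/θ for θ > 1 -/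
def Bfun (θ : ℝ) : ℝ := if θ ≤ 1 then 2 else θ + θ⁻¹

section AuxLowRank

lemma nsq_nonneg {d : ℕ} (v : Fin d → ℂ) : 0 ≤ nsq v :=
  Finset.sum_nonneg fun _ _ => sq_nonneg _

lemma nsq_smul {d : ℕ} (c : ℂ) (v : Fin d → ℂ) : nsq (c • v) = ‖c‖ ^ 2 * nsq v := by
  simp [nsq, Finset.mul_sum, mul_pow]

lemma nsq_real_smul {d : ℕ} (c : ℝ) (v : Fin d → ℂ) : nsq (c • v) = c ^ 2 * nsq v := by
  simp [nsq, Finset.mul_sum, mul_pow, norm_smul, sq_abs]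

lemma nsq_euclid {d : ℕ} (x : EuclideanSpace ℂ (Fin d)) : nsq ⇑x = ‖x‖ ^ 2 := by
  rw [EuclideanSpace.norm_eq, Real.sq_sqrt]
  · rfl
  · exact Finset.sum_nonneg fun _ _ => sq_nonneg _

lemma entry_le_one {d : ℕ} {v : Fin d → ℂ} (h : nsq v = 1) (i : Fin d) : ‖v i‖ ≤ 1 := by
  have h1 : ‖v i‖ ^ 2 ≤ 1 := by
    rw [← h]
    exact Finset.single_le_sum (f := fun j => ‖v j‖ ^ 2) (fun j _ => sq_nonneg _)
      (Finset.mem_univ i)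
  nlinarith [norm_nonneg (v i)]

lemma star_dot_self {d : ℕ} (v : Fin d → ℂ) : star v ⬝ᵥ v = (nsq v : ℂ) := by
  simp only [dotProduct, nsq, Pi.star_apply, Complex.ofReal_sum]
  refine Finset.sum_congr rfl fun i _ => ?_
  rw [Complex.star_def, ← Complex.normSq_eq_conj_mul_self, Complex.normSq_eq_norm_sq]

lemma dot_expand {d : ℕ} (A : Matrix (Fin d) (Fin d) ℂ) (v w : Fin d → ℂ) :
    star w ⬝ᵥ A.mulVec v = ∑ i, ∑ j, starRingEnd ℂ (w i) * A i j * v j := by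
  simp only [dotProduct, Matrix.mulVec, Pi.star_apply, Complex.star_def, Finset.mul_sum]
  exact Finset.sum_congr rfl fun i _ => Finset.sum_congr rfl fun j _ => by ring

lemma dot_abs_le {d : ℕ} (A : Matrix (Fin d) (Fin d) ℂ) {v w : Fin d → ℂ}
    (hv : nsq v = 1) (hw : nsq w = 1) :
    ‖star w ⬝ᵥ A.mulVec v‖ ≤ ∑ i, ∑ j, ‖A i j‖ := by
  rw [dot_expand]
  calc ‖∑ i, ∑ j, starRingEnd ℂ (w i) * A i j * v j‖
      ≤ ∑ i, ‖∑ j, starRingEnd ℂ (w i) * A i j * v j‖ := norm_sum_le _ _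
    _ ≤ ∑ i, ∑ j, ‖starRingEnd ℂ (w i) * A i j * v j‖ :=
        Finset.sum_le_sum fun i _ => norm_sum_le _ _
    _ ≤ ∑ i, ∑ j, ‖A i j‖ := by
        refine Finset.sum_le_sum fun i _ => Finset.sum_le_sum fun j _ => ?_
        rw [norm_mul, norm_mul]
        have h1 : ‖starRingEnd ℂ (w i)‖ ≤ 1 := by
          rw [RCLike.norm_conj]; exact entry_le_one hw i
        have h2 : ‖v j‖ ≤ 1 := entry_le_one hv j
        have h3 := norm_nonneg (A i j)
        rw [mul_assoc]
        calc ‖starRingEnd ℂ (w i)‖ * (‖A i j‖ * ‖v j‖)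
            ≤ 1 * (‖A i j‖ * ‖v j‖) := by
              refine mul_le_mul_of_nonneg_right h1 ?_
              positivity
          _ = ‖A i j‖ * ‖v j‖ := one_mul _
          _ ≤ ‖A i j‖ := mul_le_of_le_one_right h3 h2

lemma opN_set_bddAbove {d : ℕ} (A : Matrix (Fin d) (Fin d) ℂ) :
    BddAbove {x | ∃ v, nsq v = 1 ∧ x = Real.sqrt (nsq (A.mulVec v))} := by
  refine ⟨∑ i, ∑ j, ‖A i j‖, ?_⟩
  rintro x ⟨v, hv, rfl⟩
  set C := ∑ i, ∑ j, ‖A i j‖ with hC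
  have hC0 : 0 ≤ C := Finset.sum_nonneg fun _ _ => Finset.sum_nonneg fun _ _ => norm_nonneg _
  have hrow : ∀ i, ‖A.mulVec v i‖ ≤ ∑ j, ‖A i j‖ := by
    intro i
    calc ‖A.mulVec v i‖ = ‖∑ j, A i j * v j‖ := by simp [Matrix.mulVec, dotProduct]
    _ ≤ ∑ j, ‖A i j * v j‖ := norm_sum_le _ _
    _ ≤ ∑ j, ‖A i j‖ := by
        refine Finset.sum_le_sum fun j _ => ?_
        rw [norm_mul]
        exact mul_le_of_le_one_right (norm_nonneg _) (entry_le_one hv j)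
  have h1 : nsq (A.mulVec v) ≤ C ^ 2 := by
    have hrow2 : ∀ i, ∑ j, ‖A i j‖ ≤ C :=
      fun i => Finset.single_le_sum (f := fun i => ∑ j, ‖A i j‖)
        (fun _ _ => Finset.sum_nonneg fun _ _ => norm_nonneg _) (Finset.mem_univ i)
    calc nsq (A.mulVec v) = ∑ i, ‖A.mulVec v i‖ ^ 2 := rfl
    _ ≤ ∑ i, (∑ j, ‖A i j‖) * C := by
        refine Finset.sum_le_sum fun i _ => ?_
        have := hrow i
        have := hrow2 i
        nlinarith [norm_nonneg (A.mulVec v i),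
          Finset.sum_nonneg (fun j (_ : j ∈ Finset.univ) => norm_nonneg (A i j))]
    _ = C * C := by rw [← Finset.sum_mul]
    _ = C ^ 2 := (sq C).symm
  calc Real.sqrt (nsq (A.mulVec v)) ≤ Real.sqrt (C ^ 2) := Real.sqrt_le_sqrt h1
  _ = C := by rw [Real.sqrt_sq hC0]

lemma le_opN {d : ℕ} (A : Matrix (Fin d) (Fin d) ℂ) {v : Fin d → ℂ} (hv : nsq v = 1) :
    Real.sqrt (nsq (A.mulVec v)) ≤ opN A :=
  le_csSup (opN_set_bddAbove A) ⟨v, hv, rfl⟩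

lemma opN_nonneg {d : ℕ} (A : Matrix (Fin d) (Fin d) ℂ) : 0 ≤ opN A :=
  Real.sSup_nonneg (by rintro x ⟨v, hv, rfl⟩; exact Real.sqrt_nonneg _)

lemma opN_le {d : ℕ} {A : Matrix (Fin d) (Fin d) ℂ} {C : ℝ} (hC : 0 ≤ C)
    (h : ∀ v w : Fin d → ℂ, nsq v = 1 → nsq w = 1 → ‖star w ⬝ᵥ A.mulVec v‖ ≤ C) :
    opN A ≤ C := by
  apply Real.sSup_le _ hC
  rintro x ⟨v, hv, rfl⟩
  rcases eq_or_ne (nsq (A.mulVec v)) 0 with h0 | h0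
  · rw [h0, Real.sqrt_zero]; exact hC
  · set u := A.mulVec v with hu
    set s := Real.sqrt (nsq u) with hs
    have hs0 : 0 < s := Real.sqrt_pos.2 (lt_of_le_of_ne (nsq_nonneg u) (Ne.symm h0))
    have hsq : s ^ 2 = nsq u := Real.sq_sqrt (nsq_nonneg u)
    set w : Fin d → ℂ := ((s : ℂ))⁻¹ • u with hw
    have hwn : nsq w = 1 := by
      rw [hw, nsq_smul, norm_inv, Complex.norm_real, Real.norm_eq_abs, abs_of_pos hs0,
        inv_pow, hsq]
      field_simp
    have key : star w ⬝ᵥ A.mulVec v = (s : ℂ) := by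
      rw [← hu, hw, star_smul, smul_dotProduct, star_dot_self, ← hsq]
      have hconj : (star ((s : ℂ))⁻¹) = ((s : ℂ))⁻¹ := by
        rw [star_inv₀, Complex.star_def, Complex.conj_ofReal]
      have hsne : (s : ℂ) ≠ 0 := Complex.ofReal_ne_zero.2 hs0.ne'
      rw [hconj, smul_eq_mul]
      push_cast
      rw [sq]
      field_simp
    have h2 := h v w hv hwn
    rw [key, Complex.norm_real, Real.norm_eq_abs, abs_of_pos hs0] at h2
    exact h2

lemma basis_expand {d : ℕ} (b : OrthonormalBasis (Fin d) ℂ (EuclideanSpace ℂ (Fin d)))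
    (x : Fin d → ℂ) :
    x = ∑ k, (star (⇑(b k)) ⬝ᵥ x) • ⇑(b k) := by
  have h := b.sum_repr' ((WithLp.equiv 2 _).symm x)
  funext i
  have h3 := congrFun (congrArg WithLp.ofLp h) i
  simp only [WithLp.ofLp_sum, WithLp.ofLp_smul, EuclideanSpace.inner_eq_star_dotProduct] at h3
  simpa [dotProduct_comm] using h3.symm

lemma conj_dot {d : ℕ} (a b : Fin d → ℂ) :
    starRingEnd ℂ (star a ⬝ᵥ b) = star b ⬝ᵥ a := by
  simp only [dotProduct, map_sum, Pi.star_apply, Complex.star_def]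
  refine Finset.sum_congr rfl fun i _ => ?_
  rw [RingHom.map_mul, Complex.conj_conj]
  ring

lemma dot_sum {d : ℕ} (z : Fin d → ℂ) (f : Fin d → Fin d → ℂ) :
    z ⬝ᵥ (∑ k, f k) = ∑ k, z ⬝ᵥ f k := by
  simp [dotProduct, Finset.mul_sum, Finset.sum_apply]
  exact Finset.sum_comm

lemma herm_expand {d : ℕ} {M : Matrix (Fin d) (Fin d) ℂ} (hM : M.IsHermitian)
    (z x : Fin d → ℂ) :
    star z ⬝ᵥ M.mulVec x = ∑ k, (hM.eigenvalues k : ℂ)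
      * (starRingEnd ℂ (star (⇑(hM.eigenvectorBasis k)) ⬝ᵥ z))
      * (star (⇑(hM.eigenvectorBasis k)) ⬝ᵥ x) := by
  have hMx : M.mulVec x
      = ∑ k, (star (⇑(hM.eigenvectorBasis k)) ⬝ᵥ x) •
          ((hM.eigenvalues k : ℂ) • ⇑(hM.eigenvectorBasis k)) := by
    conv_lhs => rw [basis_expand hM.eigenvectorBasis x, ← Matrix.mulVecLin_apply]
    rw [map_sum]
    refine Finset.sum_congr rfl fun k _ => ?_
    rw [LinearMap.map_smul, Matrix.mulVecLin_apply, hM.mulVec_eigenvectorBasis]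
    congr 1
  rw [hMx, dot_sum]
  refine Finset.sum_congr rfl fun k _ => ?_
  rw [dotProduct_smul, dotProduct_smul, conj_dot]
  simp only [smul_eq_mul]
  ring

lemma unit_eigen {d : ℕ} {M : Matrix (Fin d) (Fin d) ℂ} (hM : M.IsHermitian) (k : Fin d) :
    nsq ⇑(hM.eigenvectorBasis k) = 1 := by
  rw [nsq_euclid, hM.eigenvectorBasis.orthonormal.1 k]
  norm_num

lemma eig_abs_le_opN {d : ℕ} {M : Matrix (Fin d) (Fin d) ℂ} (hM : M.IsHermitian) (k : Fin d) :
    |hM.eigenvalues k| ≤ opN M := by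
  have h1 := le_opN M (unit_eigen hM k)
  rw [hM.mulVec_eigenvectorBasis, nsq_real_smul, unit_eigen hM k, mul_one,
    Real.sqrt_sq_eq_abs] at h1
  exact h1

lemma sum_abs_eig_le {d r : ℕ} {M : Matrix (Fin d) (Fin d) ℂ} (hM : M.IsHermitian)
    (hrank : M.rank = r) : ∑ k, |hM.eigenvalues k| ≤ (r : ℝ) * opN M := by
  classical
  have hcard : (Finset.univ.filter fun k => hM.eigenvalues k ≠ 0).card = r := by
    have h1 := hM.rank_eq_card_non_zero_eigs
    rw [hrank, Fintype.card_subtype] at h1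
    exact h1.symm
  calc ∑ k, |hM.eigenvalues k|
      = ∑ k ∈ Finset.univ.filter fun k => hM.eigenvalues k ≠ 0, |hM.eigenvalues k| := by
        refine (Finset.sum_subset (Finset.filter_subset _ _) fun k _ hk => ?_).symm
        simp only [Finset.mem_filter, Finset.mem_univ, true_and, not_not] at hk
        simp [hk]
    _ ≤ (Finset.univ.filter fun k => hM.eigenvalues k ≠ 0).card • opN M :=
        Finset.sum_le_card_nsmul _ _ _ fun k _ => eig_abs_le_opN hM k
    _ = (r : ℝ) * opN M := by rw [hcard, nsmul_eq_mul]

section Meas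

variable {Ω : Type*} [MeasurableSpace Ω] {μ : Measure Ω}

lemma L2.int_mul {f g : Ω → ℂ} (hf : MemLp f 2 μ) (hg : MemLp g 2 μ) :
    Integrable (fun ω => f ω * g ω) μ := by
  have h1 := hf.norm.integrable_sq
  have h2 := hg.norm.integrable_sq
  refine (h1.add h2).mono' (hf.1.mul hg.1) ?_
  filter_upwards with ω
  simp only [Pi.add_apply]
  rw [norm_mul]
  nlinarith [norm_nonneg (f ω), norm_nonneg (g ω), sq_nonneg (‖f ω‖ - ‖g ω‖)]

lemma L2.int_norm_mul {f g : Ω → ℂ} (hf : MemLp f 2 μ) (hg : MemLp g 2 μ) :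
    Integrable (fun ω => ‖f ω‖ * ‖g ω‖) μ := by
  have := (L2.int_mul hf hg).norm
  simpa [norm_mul] using this

lemma memL2_dot {d : ℕ} {Y : Ω → Matrix (Fin d) (Fin d) ℂ}
    (hY : ∀ i j, MemLp (fun ω => Y ω i j) 2 μ) (v w : Fin d → ℂ) :
    MemLp (fun ω => star v ⬝ᵥ (Y ω).mulVec w) 2 μ := by
  have heq : (fun ω => star v ⬝ᵥ (Y ω).mulVec w)
      = fun ω => ∑ i, ∑ j, (starRingEnd ℂ (v i) * w j) * Y ω i j := by
    funext ω
    simp only [dotProduct, Matrix.mulVec, Pi.star_apply, Complex.star_def, Finset.mul_sum]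
    exact Finset.sum_congr rfl fun i _ => Finset.sum_congr rfl fun j _ => by ring
  rw [heq]
  exact memLp_finset_sum _ fun i _ => memLp_finset_sum _ fun j _ => (hY i j).const_mul _

lemma dot_Emat {d : ℕ} (μ : Measure Ω) (Z : Ω → Matrix (Fin d) (Fin d) ℂ)
    (hZ : ∀ i j, Integrable (fun ω => Z ω i j) μ) (v w : Fin d → ℂ) :
    star w ⬝ᵥ (Emat μ Z).mulVec v = ∫ ω, star w ⬝ᵥ (Z ω).mulVec v ∂μ := by
  rw [dot_expand]
  have hint : ∀ i j, Integrable (fun ω => starRingEnd ℂ (w i) * Z ω i j * v j) μ :=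
    fun i j => ((hZ i j).const_mul _).mul_const _
  calc ∑ i, ∑ j, starRingEnd ℂ (w i) * (Emat μ Z) i j * v j
      = ∑ i, ∑ j, ∫ ω, starRingEnd ℂ (w i) * Z ω i j * v j ∂μ := by
        refine Finset.sum_congr rfl fun i _ => Finset.sum_congr rfl fun j _ => ?_
        rw [show (Emat μ Z) i j = ∫ ω, Z ω i j ∂μ from rfl,
          ← integral_const_mul, ← integral_mul_const]
    _ = ∫ ω, ∑ i, ∑ j, starRingEnd ℂ (w i) * Z ω i j * v j ∂μ := by
        rw [integral_finset_sum _ (fun i _ => integrable_finset_sum _ (fun j _ => hint i j))]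
        exact Finset.sum_congr rfl fun i _ => (integral_finset_sum _ (fun j _ => hint i j)).symm
    _ = ∫ ω, star w ⬝ᵥ (Z ω).mulVec v ∂μ := by
        refine integral_congr_ae (Filter.Eventually.of_forall fun ω => ?_)
        exact (dot_expand (Z ω) v w).symm

lemma Emat_isHermitian {d : ℕ} (μ : Measure Ω) {X : Ω → Matrix (Fin d) (Fin d) ℂ}
    (hherm : ∀ ω, (X ω).IsHermitian) : (Emat μ X).IsHermitian := by
  ext i j
  rw [Matrix.conjTranspose_apply]
  show star (∫ ω, X ω j i ∂μ) = ∫ ω, X ω i j ∂μ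
  rw [Complex.star_def, ← integral_conj]
  refine integral_congr_ae (Filter.Eventually.of_forall fun ω => ?_)
  have h2 := congrFun (congrFun (hherm ω) i) j
  rw [Matrix.conjTranspose_apply] at h2
  exact h2

end Meas

end AuxLowRank


/-- Lemma: low-rank bound on the quadratic map.
If M is Hermitian of rank r then ‖E[(X - E X) M (X - E X)]‖ ≤ σ*(X)² r ‖M‖. -/
theorem qmap_low_rank_bound {Ω : Type*} [MeasurableSpace Ω] (μ : Measure Ω)
    [IsProbabilityMeasure μ] {d r : ℕ} (X : Ω → Matrix (Fin d) (Fin d) ℂ)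
    (hherm : ∀ ω, (X ω).IsHermitian)
    (hL2 : ∀ i j, MemLp (fun ω => X ω i j) 2 μ)
    (M : Matrix (Fin d) (Fin d) ℂ) (hM : M.IsHermitian) (hrank : M.rank = r) :
    opN (qmap μ X M) ≤ sigmaStarSq μ X * r * opN M := by
  classical
  -- centered variable is entrywise L²
  have hY2 : ∀ i j, MemLp (fun ω => (X ω - Emat μ X) i j) 2 μ := by
    intro i j
    have heq : (fun ω => (X ω - Emat μ X) i j) = fun ω => X ω i j - (Emat μ X) i j := by
      funext ω; simp [Matrix.sub_apply]
    rw [heq]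
    exact (hL2 i j).sub (memLp_const _)
  -- the sigma set is bounded above
  have hSbdd : BddAbove {x | ∃ v w : Fin d → ℂ, nsq v = 1 ∧ nsq w = 1 ∧
      x = ∫ ω, ‖star v ⬝ᵥ (X ω - Emat μ X).mulVec w‖ ^ 2 ∂μ} := by
    have hB2 : MemLp (fun ω => ∑ i, ∑ j, ‖(X ω - Emat μ X) i j‖) 2 μ :=
      memLp_finset_sum _ fun i _ => memLp_finset_sum _ fun j _ => (hY2 i j).norm
    refine ⟨∫ ω, (∑ i, ∑ j, ‖(X ω - Emat μ X) i j‖) ^ 2 ∂μ, ?_⟩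
    rintro x ⟨v, w, hv, hw, rfl⟩
    refine integral_mono_of_nonneg (Filter.Eventually.of_forall fun ω => by positivity)
      hB2.integrable_sq (Filter.Eventually.of_forall fun ω => ?_)
    have h1 := dot_abs_le (X ω - Emat μ X) hw hv
    have h2 : (0 : ℝ) ≤ ‖star v ⬝ᵥ (X ω - Emat μ X).mulVec w‖ := norm_nonneg _
    have h3 := mul_self_le_mul_self h2 h1
    dsimp only
    nlinarith
  have hσ0 : 0 ≤ sigmaStarSq μ X := by
    refine Real.sSup_nonneg ?_
    rintro x ⟨v, w, hv, hw, rfl⟩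
    exact integral_nonneg fun ω => by positivity
  have hσle : ∀ v w : Fin d → ℂ, nsq v = 1 → nsq w = 1 →
      (∫ ω, ‖star v ⬝ᵥ (X ω - Emat μ X).mulVec w‖ ^ 2 ∂μ) ≤ sigmaStarSq μ X :=
    fun v w hv hw => le_csSup hSbdd ⟨v, w, hv, hw, rfl⟩
  have hMop0 : 0 ≤ opN M := opN_nonneg M
  -- reduce to a bilinear estimate
  refine opN_le (mul_nonneg (mul_nonneg hσ0 (Nat.cast_nonneg r)) hMop0) ?_
  intro v w hv hw
  -- entries of the integrand are integrable
  have hZint : ∀ i j,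
      Integrable (fun ω => ((X ω - Emat μ X) * M * (X ω - Emat μ X)) i j) μ := by
    intro i j
    have heq : (fun ω => ((X ω - Emat μ X) * M * (X ω - Emat μ X)) i j)
        = fun ω => ∑ b, ∑ a, M a b *
            ((X ω - Emat μ X) i a * (X ω - Emat μ X) b j) := by
      funext ω
      simp only [Matrix.mul_apply, Finset.sum_mul]
      exact Finset.sum_congr rfl fun b _ => Finset.sum_congr rfl fun a _ => by ring
    rw [heq]
    exact integrable_finset_sum _ fun b _ => integrable_finset_sum _ fun a _ =>
      (L2.int_mul (hY2 i a) (hY2 b j)).const_mul _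
  have hq : qmap μ X M = Emat μ (fun ω => (X ω - Emat μ X) * M * (X ω - Emat μ X)) := rfl
  rw [hq, dot_Emat μ _ hZint v w]
  -- pointwise spectral expansion
  have hpt : ∀ ω, star w ⬝ᵥ ((X ω - Emat μ X) * M * (X ω - Emat μ X)).mulVec v
      = ∑ k, (hM.eigenvalues k : ℂ)
        * (starRingEnd ℂ (star (⇑(hM.eigenvectorBasis k)) ⬝ᵥ (X ω - Emat μ X).mulVec w))
        * (star (⇑(hM.eigenvectorBasis k)) ⬝ᵥ (X ω - Emat μ X).mulVec v) := by
    intro ω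
    have hA : (X ω - Emat μ X)ᴴ = X ω - Emat μ X :=
      (hherm ω).sub (Emat_isHermitian μ hherm)
    have hstep : star w ⬝ᵥ ((X ω - Emat μ X) * M * (X ω - Emat μ X)).mulVec v
        = star ((X ω - Emat μ X).mulVec w) ⬝ᵥ
            M.mulVec ((X ω - Emat μ X).mulVec v) := by
      rw [← Matrix.mulVec_mulVec, ← Matrix.mulVec_mulVec, Matrix.dotProduct_mulVec]
      congr 1
      rw [Matrix.star_mulVec, hA]
    rw [hstep, herm_expand hM]
  -- L² functions appearing in the expansion
  set g : Fin d → Ω → ℂ :=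
    fun k ω => star (⇑(hM.eigenvectorBasis k)) ⬝ᵥ (X ω - Emat μ X).mulVec w with hg
  set h : Fin d → Ω → ℂ :=
    fun k ω => star (⇑(hM.eigenvectorBasis k)) ⬝ᵥ (X ω - Emat μ X).mulVec v with hh
  have hg2 : ∀ k, MemLp (g k) 2 μ := fun k => memL2_dot hY2 _ _
  have hh2 : ∀ k, MemLp (h k) 2 μ := fun k => memL2_dot hY2 _ _
  have hint_gh : ∀ k, Integrable (fun ω => ‖g k ω‖ * ‖h k ω‖) μ :=
    fun k => L2.int_norm_mul (hg2 k) (hh2 k)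
  -- the key per-eigenvector estimate
  have hkey : ∀ k, (∫ ω, ‖g k ω‖ * ‖h k ω‖ ∂μ) ≤ sigmaStarSq μ X := by
    intro k
    have hgsq : Integrable (fun ω => ‖g k ω‖ ^ 2) μ := (hg2 k).norm.integrable_sq
    have hhsq : Integrable (fun ω => ‖h k ω‖ ^ 2) μ := (hh2 k).norm.integrable_sq
    have h1 : (∫ ω, ‖g k ω‖ * ‖h k ω‖ ∂μ)
        ≤ ∫ ω, (‖g k ω‖ ^ 2 + ‖h k ω‖ ^ 2) / 2 ∂μ := by
      refine integral_mono (hint_gh k) ((hgsq.add hhsq).div_const 2) fun ω => ?_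
      have := sq_nonneg (‖g k ω‖ - ‖h k ω‖)
      simp only [Pi.add_apply]
      nlinarith
    have h2 : (∫ ω, (‖g k ω‖ ^ 2 + ‖h k ω‖ ^ 2) / 2 ∂μ)
        = ((∫ ω, ‖g k ω‖ ^ 2 ∂μ) + ∫ ω, ‖h k ω‖ ^ 2 ∂μ) / 2 := by
      rw [integral_div, integral_add hgsq hhsq]
    have h3 : (∫ ω, ‖g k ω‖ ^ 2 ∂μ) ≤ sigmaStarSq μ X :=
      hσle _ w (unit_eigen hM k) hw
    have h4 : (∫ ω, ‖h k ω‖ ^ 2 ∂μ) ≤ sigmaStarSq μ X :=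
      hσle _ v (unit_eigen hM k) hv
    linarith
  -- assemble
  calc ‖∫ ω, star w ⬝ᵥ ((X ω - Emat μ X) * M * (X ω - Emat μ X)).mulVec v ∂μ‖
      = ‖∫ ω, ∑ k, (hM.eigenvalues k : ℂ) * (starRingEnd ℂ (g k ω)) * h k ω ∂μ‖ := by
        congr 1
        exact integral_congr_ae (Filter.Eventually.of_forall fun ω => hpt ω)
    _ ≤ ∫ ω, ‖∑ k, (hM.eigenvalues k : ℂ) * (starRingEnd ℂ (g k ω)) * h k ω‖ ∂μ :=
        norm_integral_le_integral_norm _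
    _ ≤ ∫ ω, ∑ k, |hM.eigenvalues k| * (‖g k ω‖ * ‖h k ω‖) ∂μ := by
        refine integral_mono_of_nonneg (Filter.Eventually.of_forall fun ω => norm_nonneg _)
          (integrable_finset_sum _ fun k _ => (hint_gh k).const_mul _)
          (Filter.Eventually.of_forall fun ω => ?_)
        calc ‖∑ k, (hM.eigenvalues k : ℂ) * (starRingEnd ℂ (g k ω)) * h k ω‖
            ≤ ∑ k, ‖(hM.eigenvalues k : ℂ) * (starRingEnd ℂ (g k ω)) * h k ω‖ :=
              norm_sum_le _ _
          _ = ∑ k, |hM.eigenvalues k| * (‖g k ω‖ * ‖h k ω‖) := by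
              refine Finset.sum_congr rfl fun k _ => ?_
              rw [norm_mul, norm_mul, Complex.norm_real, Real.norm_eq_abs,
                RCLike.norm_conj, mul_assoc]
    _ = ∑ k, |hM.eigenvalues k| * ∫ ω, ‖g k ω‖ * ‖h k ω‖ ∂μ := by
        rw [integral_finset_sum _ fun k _ => (hint_gh k).const_mul _]
        exact Finset.sum_congr rfl fun k _ => integral_const_mul _ _
    _ ≤ ∑ k, |hM.eigenvalues k| * sigmaStarSq μ X :=
        Finset.sum_le_sum fun k _ =>
          mul_le_mul_of_nonneg_left (hkey k) (abs_nonneg _)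
    _ = (∑ k, |hM.eigenvalues k|) * sigmaStarSq μ X := by rw [Finset.sum_mul]
    _ ≤ ((r : ℝ) * opN M) * sigmaStarSq μ X :=
        mul_le_mul_of_nonneg_right (sum_abs_eig_le hM hrank) hσ0
    _ = sigmaStarSq μ X * r * opN M := by ring
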